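/- For every positive even integer p, every positive integer q with gcd(p,q) = 1, and every natural number n, one has ∑_{k=1}^{(p+2nq)/2} (−1)^{⌊(2k−1)q/(p+2nq)⌋} = ∑_{k=1}^{p/2} (−1)^{⌊(2k−1)q/p⌋} + n, where ⌊·⌋ denotes the floor of the indicated rational number. (This is the n-fold iteration of the horizontal-twist recursion lk(R_{(p+2q)/q}) = lk(R_{p/q}) + 1 of Proposition 3.2(3), which the paper's algorithm applies repeatedly.) -/

import Mathlib

/-- Floor of an integer quotient of rationals equals Euclidean division
(for positive denominator). -/
lemma tuler_floor_int_div (a b : ℤ) (hb : 0 < b) : ⌊(a : ℚ) / (b : ℚ)⌋ = a / b := by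
  lift b to ℕ using hb.le
  exact_mod_cast Rat.floor_intCast_div_natCast a b

lemma tuler_ediv_eq_iff (a b j : ℤ) (hb : 0 < b) :
    a / b = j ↔ j * b ≤ a ∧ a < (j + 1) * b := by
  constructor
  · rintro rfl
    exact ⟨(Int.le_ediv_iff_mul_le hb).1 le_rfl,
      (Int.ediv_lt_iff_lt_mul hb).1 (lt_add_one _)⟩
  · rintro ⟨h1, h2⟩
    have h1' : j ≤ a / b := (Int.le_ediv_iff_mul_le hb).2 h1
    have h2' : a / b < j + 1 := (Int.ediv_lt_iff_lt_mul hb).2 h2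
    omega

/-- `ceil((j*p + q)/(2*q))`, the left endpoint of the `j`-th fiber. -/
def tulerA (p q j : ℤ) : ℤ := (j * p + 3 * q - 1) / (2 * q)

lemma tulerA_le (p q j k : ℤ) (hq : 0 < q) :
    tulerA p q j ≤ k ↔ j * p + q ≤ 2 * q * k := by
  have h2q : (0:ℤ) < 2 * q := by omega
  rw [← Int.lt_add_one_iff, tulerA, Int.ediv_lt_iff_lt_mul h2q]
  constructor <;> intro h <;> nlinarith

lemma tulerA_gt (p q j k : ℤ) (hq : 0 < q) :
    k < tulerA p q j ↔ 2 * q * k < j * p + q := by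
  rw [← not_le, ← not_le, tulerA_le _ _ _ _ hq]

lemma tuler_fiber_eq (p q j : ℤ) (hp : 0 < p) (hq : 0 < q) (hj0 : 0 ≤ j)
    (hjq : j ≤ q - 1) :
    (Finset.Icc (1:ℤ) (p / 2)).filter (fun k => (2 * k - 1) * q / p = j)
      = Finset.Ico (tulerA p q j) (tulerA p q (j + 1)) := by
  ext k
  simp only [Finset.mem_filter, Finset.mem_Icc, Finset.mem_Ico]
  rw [tuler_ediv_eq_iff _ _ _ hp, tulerA_le _ _ _ _ hq, tulerA_gt _ _ _ _ hq,
    Int.le_ediv_iff_mul_le (by norm_num : (0:ℤ) < 2)]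
  constructor
  · rintro ⟨⟨hk1, hk2⟩, h1, h2⟩
    constructor
    · nlinarith
    · nlinarith
  · rintro ⟨h1, h2⟩
    have hjp : 0 ≤ j * p := mul_nonneg hj0 hp.le
    have hk1 : 1 ≤ k := by nlinarith
    have hq1 : (j + 1) * p ≤ q * p := mul_le_mul_of_nonneg_right (by omega) hp.le
    have hk2 : k * 2 ≤ p := by nlinarith
    exact ⟨⟨hk1, hk2⟩, by nlinarith, by nlinarith⟩

lemma tuler_sum_eq (p q : ℤ) (hp : 0 < p) (hq : 0 < q) :
    ∑ k ∈ Finset.Icc (1:ℤ) (p / 2), (((-1:ℤˣ) ^ ((2 * k - 1) * q / p) : ℤˣ) : ℤ)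
      = ∑ j ∈ Finset.Icc (0:ℤ) (q - 1),
          (((-1:ℤˣ) ^ j : ℤˣ) : ℤ) * (tulerA p q (j + 1) - tulerA p q j) := by
  have hmaps : ∀ k ∈ Finset.Icc (1:ℤ) (p / 2),
      (2 * k - 1) * q / p ∈ Finset.Icc (0:ℤ) (q - 1) := by
    intro k hk
    simp only [Finset.mem_Icc] at hk ⊢
    obtain ⟨hk1, hk2⟩ := hk
    have hk2' : k * 2 ≤ p := (Int.le_ediv_iff_mul_le (by norm_num : (0:ℤ) < 2)).1 hk2
    constructor
    · exact Int.ediv_nonneg (by nlinarith) hp.le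
    · have : (2 * k - 1) * q / p < q := (Int.ediv_lt_iff_lt_mul hp).2 (by nlinarith)
      omega
  rw [← Finset.sum_fiberwise_of_maps_to hmaps]
  refine Finset.sum_congr rfl fun j hj => ?_
  simp only [Finset.mem_Icc] at hj
  have hstep : ∑ k ∈ (Finset.Icc (1:ℤ) (p / 2)).filter
      (fun k => (2 * k - 1) * q / p = j), (((-1:ℤˣ) ^ ((2 * k - 1) * q / p) : ℤˣ) : ℤ)
      = ∑ _k ∈ (Finset.Icc (1:ℤ) (p / 2)).filter
      (fun k => (2 * k - 1) * q / p = j), (((-1:ℤˣ) ^ j : ℤˣ) : ℤ) := by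
    refine Finset.sum_congr rfl fun k hk => ?_
    rw [(Finset.mem_filter.1 hk).2]
  rw [hstep, Finset.sum_const, tuler_fiber_eq p q j hp hq hj.1 hj.2, Int.card_Ico]
  have hmono : tulerA p q j ≤ tulerA p q (j + 1) := by
    apply Int.ediv_le_ediv (by omega)
    nlinarith
  rw [nsmul_eq_mul, Int.toNat_of_nonneg (by omega)]
  ring

lemma tuler_alt_sum_nat (m : ℕ) :
    ∑ j ∈ Finset.Icc (0:ℤ) ((m:ℤ) - 1), (((-1:ℤˣ) ^ j : ℤˣ) : ℤ)
      = if Even m then 0 else 1 := by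
  induction m with
  | zero => simp
  | succ m ih =>
    have hins : Finset.Icc (0:ℤ) (((m:ℕ):ℤ) + 1 - 1)
        = insert ((m:ℕ):ℤ) (Finset.Icc (0:ℤ) ((m:ℤ) - 1)) := by
      ext x
      simp only [Finset.mem_Icc, Finset.mem_insert]
      omega
    push_cast
    rw [hins, Finset.sum_insert (by simp only [Finset.mem_Icc]; omega), ih]
    have hσ : (((-1:ℤˣ) ^ ((m:ℕ):ℤ) : ℤˣ) : ℤ) = (-1:ℤ) ^ m := by
      rw [zpow_natCast]
      simp
    rw [hσ]
    rcases Nat.even_or_odd m with he | hodd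
    · rw [if_pos he, if_neg (by simp [Nat.even_add_one, he]), he.neg_one_pow]
      ring
    · have hne : ¬ Even m := Nat.not_even_iff_odd.2 hodd
      rw [if_neg hne, if_pos (by simp [Nat.even_add_one, hne]), hodd.neg_one_pow]
      ring

lemma tuler_alt_sum (q : ℤ) (hq : 0 < q) (ho : Odd q) :
    ∑ j ∈ Finset.Icc (0:ℤ) (q - 1), (((-1:ℤˣ) ^ j : ℤˣ) : ℤ) = 1 := by
  have h := tuler_alt_sum_nat q.toNat
  rw [Int.toNat_of_nonneg hq.le] at h
  have ho' : Odd q.toNat := by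
    rw [← Int.toNat_of_nonneg hq.le] at ho
    exact_mod_cast ho
  rw [h, if_neg (Nat.not_even_iff_odd.2 ho')]

lemma tuler_step (p q : ℤ) (hp : 0 < p) (hq : 0 < q) (ho : Odd q) :
    ∑ k ∈ Finset.Icc (1:ℤ) ((p + 2 * q) / 2),
        (((-1:ℤˣ) ^ ((2 * k - 1) * q / (p + 2 * q)) : ℤˣ) : ℤ)
      = (∑ k ∈ Finset.Icc (1:ℤ) (p / 2),
        (((-1:ℤˣ) ^ ((2 * k - 1) * q / p) : ℤˣ) : ℤ)) + 1 := by
  have hA : ∀ j : ℤ, tulerA (p + 2 * q) q j = tulerA p q j + j := by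
    intro j
    unfold tulerA
    rw [show j * (p + 2 * q) + 3 * q - 1 = (j * p + 3 * q - 1) + j * (2 * q) from by ring,
      Int.add_mul_ediv_right _ _ (by omega : (2:ℤ) * q ≠ 0)]
  rw [tuler_sum_eq (p + 2 * q) q (by omega) hq, tuler_sum_eq p q hp hq]
  have hcongr : ∑ j ∈ Finset.Icc (0:ℤ) (q - 1),
      (((-1:ℤˣ) ^ j : ℤˣ) : ℤ) * (tulerA (p + 2 * q) q (j + 1) - tulerA (p + 2 * q) q j)
      = ∑ j ∈ Finset.Icc (0:ℤ) (q - 1),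
      ((((-1:ℤˣ) ^ j : ℤˣ) : ℤ) * (tulerA p q (j + 1) - tulerA p q j)
        + (((-1:ℤˣ) ^ j : ℤˣ) : ℤ)) := by
    refine Finset.sum_congr rfl fun j _ => ?_
    rw [hA, hA]
    ring
  rw [hcongr, Finset.sum_add_distrib, tuler_alt_sum q hq ho]

lemma tuler_main (p q : ℤ) (hp : 0 < p) (hq : 0 < q) (ho : Odd q) (n : ℕ) :
    ∑ k ∈ Finset.Icc (1:ℤ) ((p + 2 * (n:ℤ) * q) / 2),
        (((-1:ℤˣ) ^ ((2 * k - 1) * q / (p + 2 * (n:ℤ) * q)) : ℤˣ) : ℤ)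
      = (∑ k ∈ Finset.Icc (1:ℤ) (p / 2),
        (((-1:ℤˣ) ^ ((2 * k - 1) * q / p) : ℤˣ) : ℤ)) + (n:ℤ) := by
  induction n with
  | zero => simp
  | succ n ih =>
    have hn : (0:ℤ) ≤ (n:ℤ) := Int.natCast_nonneg n
    have hp' : 0 < p + 2 * (n:ℤ) * q := by nlinarith
    have key := tuler_step (p + 2 * (n:ℤ) * q) q hp' hq ho
    push_cast
    rw [show p + 2 * ((n:ℤ) + 1) * q = (p + 2 * (n:ℤ) * q) + 2 * q from by ring, key, ih]
    ring

/-- The `n`-fold iteration of the horizontal-twist recursion of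
Proposition 3.2(3): `S(p + 2nq, q) = S(p, q) + n` for Tuler sums. -/
theorem tuler_sum_iterate_twists (p q : ℤ) (hp : 0 < p) (hpe : Even p)
    (hq : 0 < q) (hpq : Int.gcd p q = 1) (n : ℕ) :
    ∑ k ∈ Finset.Icc (1 : ℤ) ((p + 2 * (n : ℤ) * q) / 2),
        (((-1 : ℤˣ) ^ ⌊(((2 * k - 1) * q : ℤ) : ℚ) / (((p + 2 * (n : ℤ) * q) : ℤ) : ℚ)⌋ : ℤˣ) : ℤ)
      = (∑ k ∈ Finset.Icc (1 : ℤ) (p / 2),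
        (((-1 : ℤˣ) ^ ⌊(((2 * k - 1) * q : ℤ) : ℚ) / ((p : ℤ) : ℚ)⌋ : ℤˣ) : ℤ)) + (n : ℤ) := by
  have ho : Odd q := by
    rcases Int.even_or_odd q with he | ho
    · exfalso
      have h2 : (2:ℤ) ∣ Int.gcd p q := Int.dvd_coe_gcd hpe.two_dvd he.two_dvd
      rw [hpq] at h2
      norm_num at h2
    · exact ho
  have hn : (0:ℤ) ≤ (n:ℤ) := Int.natCast_nonneg n
  have hp' : 0 < p + 2 * (n:ℤ) * q := by nlinarith
  have e1 : ∀ (P : ℤ), 0 < P →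
      (∑ k ∈ Finset.Icc (1:ℤ) (P / 2),
        (((-1:ℤˣ) ^ ⌊(((2 * k - 1) * q : ℤ) : ℚ) / ((P : ℤ) : ℚ)⌋ : ℤˣ) : ℤ))
      = ∑ k ∈ Finset.Icc (1:ℤ) (P / 2),
        (((-1:ℤˣ) ^ ((2 * k - 1) * q / P) : ℤˣ) : ℤ) := by
    intro P hP
    refine Finset.sum_congr rfl fun k _ => ?_
    rw [tuler_floor_int_div _ _ hP]
  rw [e1 p hp, e1 (p + 2 * (n:ℤ) * q) hp']
  exact tuler_main p q hp hq ho n
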